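/- arXiv:2602.13619 — 6 statements merged into one kernel-verified Lean document; each statement's English description precedes it below -/
import Mathlib

section
/- Let W be the q-ary symmetric channel with diagonal entry v and off-diagonal entry u, where v = 1 − (q−1)u and v > u. Then for any two distributions P₀, P₁ on the common alphabet of size q supported on two points {x₁, x₂} with P₀(x₁) > P₁(x₁) > 0, the ratio D_∞(Q₀‖Q₁)/D_∞(P₀‖P₁) of order-∞ Rényi divergences of the output distributions to the input distributions is at most (v−u)/v. -/
open intervalIntegral

lemma key_ineq (u t a b : ℝ) (hu : 0 ≤ u) (ht : 0 < t) (hb : 0 < b) (hab : b < a)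
    (ha1 : a ≤ 1) :
    (u + t) * Real.log ((u + t * a) / (u + t * b)) ≤ t * Real.log (a / b) := by
  have hub : 0 < u + t * b := by positivity
  have hua : 0 < u + t * a := by nlinarith
  have I1 : (∫ x in b..a, (u + t * x)⁻¹) = t⁻¹ * Real.log ((u + t * a) / (u + t * b)) := by
    rw [integral_comp_add_mul (fun x => x⁻¹) (ne_of_gt ht) u,
      integral_inv (by
        intro h
        rcases Set.mem_uIcc.1 h with ⟨h1, _⟩ | ⟨_, h2⟩ <;> nlinarith)]
    simp [smul_eq_mul]
  have I2 : (∫ x in b..a, x⁻¹) = Real.log (a / b) :=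
    integral_inv (by
      intro h
      rcases Set.mem_uIcc.1 h with ⟨h1, _⟩ | ⟨_, h2⟩ <;> nlinarith)
  have hint1 : IntervalIntegrable (fun x => (u + t) * (u + t * x)⁻¹) MeasureTheory.volume b a := by
    apply ContinuousOn.intervalIntegrable
    apply ContinuousOn.mul continuousOn_const
    apply ContinuousOn.inv₀ (by fun_prop)
    intro x hx
    rcases Set.mem_uIcc.1 hx with ⟨h1, _⟩ | ⟨_, h2⟩ <;> nlinarith
  have hint2 : IntervalIntegrable (fun x : ℝ => x⁻¹) MeasureTheory.volume b a := by
    apply ContinuousOn.intervalIntegrable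
    apply ContinuousOn.inv₀ (by fun_prop)
    intro x hx
    rcases Set.mem_uIcc.1 hx with ⟨h1, _⟩ | ⟨_, h2⟩ <;> nlinarith
  have hmono : (∫ x in b..a, (u + t) * (u + t * x)⁻¹) ≤ ∫ x in b..a, x⁻¹ := by
    apply integral_mono_on (le_of_lt hab) hint1 hint2
    intro x hx
    have hx1 : b ≤ x := hx.1
    have hx2 : x ≤ a := hx.2
    have hxpos : 0 < x := lt_of_lt_of_le hb hx1
    have hdx : 0 < u + t * x := by positivity
    rw [show (u + t) * (u + t * x)⁻¹ = (u + t) / (u + t * x) from (div_eq_mul_inv _ _).symm,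
      show x⁻¹ = 1 / x from (one_div x).symm, div_le_div_iff₀ hdx hxpos]
    nlinarith
  rw [integral_const_mul, I1, I2] at hmono
  have ht' : t ≠ 0 := ne_of_gt ht
  calc (u + t) * Real.log ((u + t * a) / (u + t * b))
      = t * ((u + t) * (t⁻¹ * Real.log ((u + t * a) / (u + t * b)))) := by
        field_simp
    _ ≤ t * Real.log (a / b) := by
        apply mul_le_mul_of_nonneg_left hmono (le_of_lt ht)

/-- For the q-ary symmetric channel W with diagonal v and off-diagonal u,
v = 1 − (q−1)u, v > u, and any two distributions P₀, P₁ supported on {x₁, x₂} with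
P₀(x₁) > P₁(x₁) > 0, the ratio D_∞(Q₀‖Q₁)/D_∞(P₀‖P₁) of order-∞ Rényi divergences of
the output distributions to the input distributions is at most (v−u)/v. -/
theorem stmt_2 {X : Type*} [Fintype X] [DecidableEq X] [Nonempty X]
    (u v : ℝ) (hu : 0 ≤ u) (hv1 : v ≤ 1)
    (hqsym : v = 1 - ((Fintype.card X : ℝ) - 1) * u) (hvu : u < v)
    (x₁ x₂ : X) (hx : x₁ ≠ x₂)
    (P₀ P₁ : X → ℝ) (h0 : ∀ x, 0 ≤ P₀ x) (h1 : ∀ x, 0 ≤ P₁ x)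
    (hs0 : ∑ x, P₀ x = 1) (hs1 : ∑ x, P₁ x = 1)
    (hsupp0 : ∀ x, x ≠ x₁ → x ≠ x₂ → P₀ x = 0)
    (hsupp1 : ∀ x, x ≠ x₁ → x ≠ x₂ → P₁ x = 0)
    (horder : P₁ x₁ < P₀ x₁) (hpos : 0 < P₁ x₁) :
    Real.log (Finset.univ.sup' Finset.univ_nonempty fun y =>
        (∑ x, P₀ x * (if y = x then v else u)) / (∑ x, P₁ x * (if y = x then v else u)))
      / Real.log (max (P₀ x₁ / P₁ x₁) (P₀ x₂ / P₁ x₂))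
      ≤ (v - u) / v := by
  set a := P₀ x₁ with ha
  set b := P₁ x₁ with hb
  have ht : 0 < v - u := sub_pos.2 hvu
  have hv : 0 < v := lt_of_le_of_lt hu hvu
  -- pair sums
  have hpair : ∀ (P : X → ℝ), (∀ x, x ≠ x₁ → x ≠ x₂ → P x = 0) → (∑ x, P x = 1) →
      P x₁ + P x₂ = 1 := by
    intro P hsupp hs
    rw [← hs]
    rw [show (∑ x, P x) = ∑ x ∈ ({x₁, x₂} : Finset X), P x by
      symm
      apply Finset.sum_subset (Finset.subset_univ _)
      intro x _ hxnot
      simp only [Finset.mem_insert, Finset.mem_singleton, not_or] at hxnot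
      exact hsupp x hxnot.1 hxnot.2]
    rw [Finset.sum_pair hx]
  have hP02 : P₀ x₂ = 1 - a := by have := hpair P₀ hsupp0 hs0; linarith
  have hP12 : P₁ x₂ = 1 - b := by have := hpair P₁ hsupp1 hs1; linarith
  have ha1 : a ≤ 1 := by have := h0 x₂; rw [hP02] at this; linarith
  have hb1 : b < 1 := lt_of_lt_of_le horder ha1
  -- output distribution formula
  have hQ : ∀ (P : X → ℝ), (∑ x, P x = 1) → ∀ y,
      (∑ x, P x * (if y = x then v else u)) = u + (v - u) * P y := by
    intro P hs y
    have hterm : ∀ x, P x * (if y = x then v else u)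
        = P x * u + (if y = x then P x * (v - u) else 0) := by
      intro x; split <;> ring
    rw [Finset.sum_congr rfl (fun x _ => hterm x), Finset.sum_add_distrib,
      ← Finset.sum_mul, hs, Finset.sum_ite_eq]
    simp only [Finset.mem_univ, if_true, one_mul]
    ring
  -- the supremum
  have hdenR : 0 < u + (v - u) * b := by positivity
  have hnumR : 0 < u + (v - u) * a := by nlinarith
  set R : ℝ := (u + (v - u) * a) / (u + (v - u) * b) with hR
  have hRpos : 0 < R := div_pos hnumR hdenR
  have hsup : (Finset.univ.sup' Finset.univ_nonempty fun y =>
      (∑ x, P₀ x * (if y = x then v else u)) / (∑ x, P₁ x * (if y = x then v else u))) = R := by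
    apply le_antisymm
    · apply Finset.sup'_le
      intro y _
      rw [hQ P₀ hs0 y, hQ P₁ hs1 y]
      by_cases hy1 : y = x₁
      · subst hy1; exact le_refl _
      · by_cases hy2 : y = x₂
        · subst hy2
          rw [hP02, hP12, hR, div_le_div_iff₀ (by nlinarith) hdenR]
          nlinarith [mul_nonneg (mul_nonneg (le_of_lt ht)
            (by linarith : (0:ℝ) ≤ a - b)) (by linarith : (0:ℝ) ≤ 2 * u + (v - u))]
        · rw [hsupp0 y hy1 hy2, hsupp1 y hy1 hy2]
          rcases eq_or_lt_of_le hu with hu0 | hu0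
          · simp [← hu0]
            positivity
          · rw [mul_zero, add_zero, div_self (ne_of_gt hu0), hR,
              le_div_iff₀ hdenR]
            nlinarith
    · have h := Finset.le_sup' (f := fun y =>
        (∑ x, P₀ x * (if y = x then v else u)) / (∑ x, P₁ x * (if y = x then v else u)))
        (Finset.mem_univ x₁)
      rwa [hQ P₀ hs0 x₁, hQ P₁ hs1 x₁] at h
  -- the denominator max
  have hmax : max (P₀ x₁ / P₁ x₁) (P₀ x₂ / P₁ x₂) = a / b := by
    rw [hP02, hP12]
    apply max_eq_left
    rw [div_le_div_iff₀ (by linarith) hpos]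
    nlinarith
  rw [hsup, hmax]
  have hlogpos : 0 < Real.log (a / b) := Real.log_pos ((one_lt_div hpos).2 horder)
  rw [div_le_div_iff₀ hlogpos hv]
  have := key_ineq u (v - u) a b hu ht hpos horder ha1
  have hv' : u + (v - u) = v := by ring
  rw [hv'] at this
  linarith
end

section
/- Let W be the q-ary symmetric channel with diagonal entry v and off-diagonal entry u (v = 1 − (q−1)u, v > u). For any p₀ > p₁ in (0,1], the ratio (log f(p₀) − log f(p₁)) / (log p₀ − log p₁), where f(p) = u + p(v−u), is at most (v−u)/v. -/
/-- For the q-ary symmetric channel function f(p) = u + p(v−u) with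
u, v ∈ (0,1), v > u, and any 0 < p₁ < p₀ ≤ 1, the logarithmic mean-value ratio
(log f(p₀) − log f(p₁)) / (log p₀ − log p₁) is at most (v−u)/v. -/
theorem stmt_3 (u v : ℝ) (hu : 0 < u) (huv : u < v) (hv : v < 1)
    (p₀ p₁ : ℝ) (hp₁ : 0 < p₁) (hp : p₁ < p₀) (hp₀ : p₀ ≤ 1) :
    (Real.log (u + p₀ * (v - u)) - Real.log (u + p₁ * (v - u))) /
      (Real.log p₀ - Real.log p₁) ≤ (v - u) / v := by
  have hvu : 0 < v - u := sub_pos.2 huv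
  have hv0 : 0 < v := hu.trans huv
  set c : ℝ := (v - u) / v with hc
  have hDpos : 0 < Real.log p₀ - Real.log p₁ := sub_pos.2 (Real.log_lt_log hp₁ hp)
  rw [div_le_iff₀ hDpos]
  set g : ℝ → ℝ := fun x => c * Real.log x - Real.log (u + x * (v - u)) with hg
  have hfpos : ∀ x : ℝ, 0 ≤ x → 0 < u + x * (v - u) := fun x hx =>
    lt_of_lt_of_le hu (le_add_of_nonneg_right (mul_nonneg hx hvu.le))
  have hderiv : ∀ x : ℝ, 0 < x →
      HasDerivAt g (c * x⁻¹ - (v - u) / (u + x * (v - u))) x := by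
    intro x hx
    have h1 : HasDerivAt (fun y : ℝ => c * Real.log y) (c * x⁻¹) x :=
      (Real.hasDerivAt_log hx.ne').const_mul c
    have h2 : HasDerivAt (fun y : ℝ => u + y * (v - u)) (v - u) x := by
      simpa using ((hasDerivAt_id x).mul_const (v - u)).const_add u
    have h3 := h2.log (hfpos x hx.le).ne'
    exact h1.sub h3
  have hmono : MonotoneOn g (Set.Icc p₁ p₀) := by
    apply monotoneOn_of_deriv_nonneg (convex_Icc p₁ p₀)
    · intro x hx
      exact ((hderiv x (lt_of_lt_of_le hp₁ hx.1)).continuousAt).continuousWithinAt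
    · intro x hx
      rw [interior_Icc] at hx
      exact ((hderiv x (lt_trans hp₁ hx.1)).differentiableAt).differentiableWithinAt
    · intro x hx
      rw [interior_Icc] at hx
      have hx0 : 0 < x := lt_trans hp₁ hx.1
      rw [(hderiv x hx0).deriv]
      have hx1 : x ≤ 1 := le_of_lt (lt_of_lt_of_le hx.2 hp₀)
      have hkey : v * x ≤ u + x * (v - u) := by nlinarith
      have : (v - u) / (u + x * (v - u)) ≤ (v - u) / (v * x) :=
        div_le_div_of_nonneg_left hvu.le (by positivity) hkey
      have heq : (v - u) / (v * x) = c * x⁻¹ := by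
        rw [hc]; field_simp
      linarith [heq ▸ this]
  have key : g p₁ ≤ g p₀ :=
    hmono (Set.left_mem_Icc.2 hp.le) (Set.right_mem_Icc.2 hp.le) hp.le
  simp only [hg] at key
  linarith
end

section
/- Let u, v > 0 with v > u, and define f(p) = u + p(v−u) on [0,1]. Then for any 0 < p₁ < p₀ < 1, the ratio [log(f(p₀)/f(1−p₀)) − log(f(p₁)/f(1−p₁))] / [log(p₀/(1−p₀)) − log(p₁/(1−p₁))] is at most (v−u)/(v+u). -/
open Real Set

/-- For u, v > 0 with v > u and f(p) = u + p(v−u), for any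
0 < p₁ < p₀ < 1, the ratio
[log(f(p₀)/f(1−p₀)) − log(f(p₁)/f(1−p₁))] / [log(p₀/(1−p₀)) − log(p₁/(1−p₁))]
is at most (v−u)/(v+u). -/
theorem stmt_4 (u v : ℝ) (hu : 0 < u) (huv : u < v)
    (p₀ p₁ : ℝ) (h1 : 0 < p₁) (h2 : p₁ < p₀) (h3 : p₀ < 1) :
    (Real.log ((u + p₀ * (v - u)) / (u + (1 - p₀) * (v - u))) -
        Real.log ((u + p₁ * (v - u)) / (u + (1 - p₁) * (v - u)))) /
      (Real.log (p₀ / (1 - p₀)) - Real.log (p₁ / (1 - p₁))) ≤ (v - u) / (v + u) := by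
  have hv : 0 < v := hu.trans huv
  have hs : 0 < v - u := sub_pos.mpr huv
  have hvu : 0 < v + u := by linarith
  set s := v - u with hsdef
  set c := (v - u) / (v + u) with hcdef
  set F : ℝ → ℝ := fun p =>
    c * (Real.log p - Real.log (1 - p)) -
      (Real.log (u + p * s) - Real.log (u + (1 - p) * s)) with hFdef
  -- derivative of F
  have hF : ∀ x ∈ Ioo (0:ℝ) 1,
      HasDerivAt F (c * (x⁻¹ + (1 - x)⁻¹) - (s / (u + x * s) + s / (u + (1 - x) * s))) x := by
    rintro x ⟨hx0, hx1⟩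
    have hx1' : 0 < 1 - x := by linarith
    have hd1 : 0 < u + x * s := by positivity
    have hd2 : 0 < u + (1 - x) * s := by positivity
    have l1 : HasDerivAt (fun p : ℝ => Real.log p) x⁻¹ x := Real.hasDerivAt_log hx0.ne'
    have l2 : HasDerivAt (fun p : ℝ => Real.log (1 - p)) (-(1 - x)⁻¹) x := by
      have inner : HasDerivAt (fun p : ℝ => 1 - p) (-1) x := by
        simpa using (hasDerivAt_id x).const_sub 1
      have := (Real.hasDerivAt_log hx1'.ne').comp x inner
      simpa [Function.comp_def] using this
    have l3 : HasDerivAt (fun p : ℝ => Real.log (u + p * s)) (s / (u + x * s)) x := by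
      have inner : HasDerivAt (fun p : ℝ => u + p * s) s x := by
        simpa using ((hasDerivAt_id x).mul_const s).const_add u
      have := (Real.hasDerivAt_log hd1.ne').comp x inner
      simpa [div_eq_inv_mul, Function.comp_def] using this
    have l4 : HasDerivAt (fun p : ℝ => Real.log (u + (1 - p) * s)) (-(s / (u + (1 - x) * s))) x := by
      have inner : HasDerivAt (fun p : ℝ => u + (1 - p) * s) (-s) x := by
        have : HasDerivAt (fun p : ℝ => (1 - p) * s) (-s) x := by
          simpa using (((hasDerivAt_id x).const_sub 1).mul_const s)
        simpa using this.const_add u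
      have := (Real.hasDerivAt_log hd2.ne').comp x inner
      simpa [div_eq_inv_mul, mul_comm, Function.comp_def] using this
    have : HasDerivAt F (c * (x⁻¹ - -(1 - x)⁻¹) - (s / (u + x * s) - -(s / (u + (1 - x) * s)))) x :=
      (((l1.sub l2).const_mul c).sub (l3.sub l4))
    convert this using 1
    ring
  -- F is monotone on Ioo 0 1
  have mono : MonotoneOn F (Ioo (0:ℝ) 1) := by
    apply monotoneOn_of_deriv_nonneg (convex_Ioo 0 1)
    · exact fun x hx => (hF x hx).differentiableAt.continuousAt.continuousWithinAt
    · rw [interior_Ioo]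
      exact fun x hx => (hF x hx).differentiableAt.differentiableWithinAt
    · rw [interior_Ioo]
      rintro x hx
      obtain ⟨hx0, hx1⟩ := hx
      have hx1' : 0 < 1 - x := by linarith
      have hd1 : 0 < u + x * s := by positivity
      have hd2 : 0 < u + (1 - x) * s := by positivity
      rw [(hF x ⟨hx0, hx1⟩).deriv]
      have e1 : s / (u + x * s) + s / (u + (1 - x) * s)
          = s * (v + u) / ((u + x * s) * (u + (1 - x) * s)) := by
        field_simp
        ring
      have e2 : c * (x⁻¹ + (1 - x)⁻¹) = s / ((v + u) * (x * (1 - x))) := by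
        rw [hcdef]
        field_simp
        rw [hsdef]; ring
      rw [e1, e2, sub_nonneg, div_le_div_iff₀ (by positivity) (by positivity)]
      simp only [hsdef]
      nlinarith [mul_nonneg (mul_nonneg hs.le (mul_nonneg hu.le hv.le)) (sq_nonneg (1 - 2*x)),
        mul_pos hx0 hx1', sq_nonneg (1 - 2*x)]
  -- apply monotonicity
  have h1' : 0 < 1 - p₁ := by linarith
  have h0' : 0 < 1 - p₀ := by linarith
  have hp0 : 0 < p₀ := h1.trans h2
  have hFle : F p₁ ≤ F p₀ := mono ⟨h1, by linarith⟩ ⟨by linarith, h3⟩ h2.le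
  have hd01 : 0 < u + p₀ * s := by positivity
  have hd02 : 0 < u + (1 - p₀) * s := by positivity
  have hd11 : 0 < u + p₁ * s := by positivity
  have hd12 : 0 < u + (1 - p₁) * s := by positivity
  -- denominator positive
  have hD : 0 < Real.log (p₀ / (1 - p₀)) - Real.log (p₁ / (1 - p₁)) := by
    have : p₁ / (1 - p₁) < p₀ / (1 - p₀) := by
      rw [div_lt_div_iff₀ h1' h0']
      nlinarith
    linarith [Real.log_lt_log (by positivity) this]
  rw [div_le_iff₀ hD]
  rw [Real.log_div hd01.ne' hd02.ne', Real.log_div hd11.ne' hd12.ne',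
    Real.log_div h1.ne' h1'.ne', Real.log_div (by linarith : (0:ℝ) < p₀).ne' h0'.ne']
  simp only [hFdef] at hFle
  linarith
end

section
/- Let P₀, P₁ be distributions on a finite alphabet with common support and Chernoff information I_ch(P₀,P₁) = −min_{λ∈(0,1)} log Σ_x P₀(x)^λ P₁(x)^{1−λ} > 0. Let S_m = Σ_{j=1}^m log(P₁(X_j)/P₀(X_j)) with X_j i.i.d. ~ P₀. Then for any integers 0 < a < b, P(max_{a < m ≤ b} S_m > 0) ≤ exp(−a · I_ch(P₀,P₁)). -/
open MeasureTheory ProbabilityTheory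

open Finset

section
variable {α : Type*} [Fintype α]

lemma aux_key [Nonempty α] {b : ℕ} (p : Fin b → Prop) [DecidablePred p]
    (I : (Fin b → α) → ℝ) (hI : ∀ v w : Fin b → α, (∀ j, p j → v j = w j) → I v = I w)
    (h : Fin b → α → ℝ) :
    ∑ v : Fin b → α, I v * ∏ j, h j (v j)
      = (∑ u : ∀ _ : {j : Fin b // p j}, α,
          I ((Equiv.piEquivPiSubtypeProd p fun _ => α).symm (u, fun _ => Classical.arbitrary α))
            * ∏ j : {j : Fin b // p j}, h j (u j))
        * ∏ j : {j : Fin b // ¬ p j}, ∑ x, h (j : Fin b) x := by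
  classical
  set e := (Equiv.piEquivPiSubtypeProd p fun _ : Fin b => α) with he
  rw [← Equiv.sum_comp e.symm (fun v => I v * ∏ j, h j (v j)), Fintype.sum_prod_type,
    Finset.sum_mul]
  refine Finset.sum_congr rfl fun u _ => ?_
  have hIc : ∀ w, I (e.symm (u, w)) = I (e.symm (u, fun _ => Classical.arbitrary α)) := by
    intro w
    refine hI _ _ fun j hj => ?_
    simp [he, Equiv.piEquivPiSubtypeProd, dif_pos hj]
  have hprod : ∀ w : ∀ _ : {j : Fin b // ¬ p j}, α,
      (∏ j, h j (e.symm (u, w) j))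
        = (∏ j : {j : Fin b // p j}, h j (u j)) * ∏ j : {j : Fin b // ¬ p j}, h j (w j) := by
    intro w
    rw [← Fintype.prod_subtype_mul_prod_subtype p (fun j => h j (e.symm (u, w) j))]
    congr 1
    · exact Finset.prod_congr rfl fun j _ => by
        simp [he, Equiv.piEquivPiSubtypeProd, dif_pos j.2]
    · exact Finset.prod_congr rfl fun j _ => by
        simp [he, Equiv.piEquivPiSubtypeProd, dif_neg j.2]
  calc ∑ w, I (e.symm (u, w)) * ∏ j, h j (e.symm (u, w) j)
      = ∑ w : ∀ _ : {j : Fin b // ¬ p j}, α,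
          (I (e.symm (u, fun _ => Classical.arbitrary α)) * ∏ j : {j : Fin b // p j}, h j (u j))
            * ∏ j : {j : Fin b // ¬ p j}, h j (w j) := by
        refine Finset.sum_congr rfl fun w _ => ?_
        rw [hIc, hprod]; ring
    _ = _ := by
        rw [← Finset.mul_sum, ← Fintype.prod_sum (fun (j : {j : Fin b // ¬ p j}) x => h j x)]

lemma aux_compare [Nonempty α] {b : ℕ} (p : Fin b → Prop) [DecidablePred p]
    (I : (Fin b → α) → ℝ) (hI : ∀ v w : Fin b → α, (∀ j, p j → v j = w j) → I v = I w)
    (f g : Fin b → α → ℝ) (hfg : ∀ j, p j → f j = g j) :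
    (∑ v : Fin b → α, I v * ∏ j, f j (v j)) * ∏ j : {j : Fin b // ¬ p j}, ∑ x, g (j : Fin b) x
      = (∑ v : Fin b → α, I v * ∏ j, g j (v j)) * ∏ j : {j : Fin b // ¬ p j}, ∑ x, f (j : Fin b) x := by
  rw [aux_key p I hI f, aux_key p I hI g]
  have : (∑ u : ∀ _ : {j : Fin b // p j}, α,
          I ((Equiv.piEquivPiSubtypeProd p fun _ => α).symm (u, fun _ => Classical.arbitrary α))
            * ∏ j : {j : Fin b // p j}, f j (u j))
      = (∑ u : ∀ _ : {j : Fin b // p j}, α,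
          I ((Equiv.piEquivPiSubtypeProd p fun _ => α).symm (u, fun _ => Classical.arbitrary α))
            * ∏ j : {j : Fin b // p j}, g j (u j)) := by
    refine Finset.sum_congr rfl fun u _ => ?_
    congr 1
    exact Finset.prod_congr rfl fun j _ => by rw [hfg j j.2]
  rw [this]; ring

lemma aux_card {b m : ℕ} (hm : m ≤ b) :
    Fintype.card {j : Fin b // ¬ (j : ℕ) < m} = b - m := by
  classical
  have : (Finset.univ.filter (fun j : Fin b => ¬ (j : ℕ) < m))
      = Finset.map ⟨fun i : Fin (b - m) => (⟨m + i, by omega⟩ : Fin b),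
          by intro x y hxy; simpa [Fin.ext_iff] using hxy⟩ Finset.univ := by
    ext j
    simp only [Finset.mem_filter, Finset.mem_univ, true_and, Finset.mem_map,
      Function.Embedding.coeFn_mk, Fin.ext_iff]
    constructor
    · intro hj; exact ⟨⟨j - m, by omega⟩, by show m + ((j : ℕ) - m) = (j : ℕ); omega⟩
    · rintro ⟨i, hi⟩; have hi' : m + (i : ℕ) = (j : ℕ) := hi; omega
  rw [Fintype.card_subtype, this]
  simp

lemma stepB (P₀ P₁ : α → ℝ) (h0 : ∀ x, 0 < P₀ x) (h1 : ∀ x, 0 < P₁ x)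
    (hs0 : ∑ x, P₀ x = 1) (hs1 : ∑ x, P₁ x = 1)
    (a b : ℕ) (ha : 0 < a) (hab : a < b) (l : ℝ) (hl : l ∈ Set.Ioo (0:ℝ) 1)
    (B : Finset (Fin b → α))
    (hBmem : ∀ v : Fin b → α, v ∈ B ↔ ∃ m, a < m ∧ m ≤ b ∧
        0 < ∑ j : Fin b, (if (j : ℕ) < m then Real.log (P₁ (v j) / P₀ (v j)) else 0)) :
    ∑ v ∈ B, ∏ j, P₀ (v j) ≤ (∑ x, P₀ x ^ l * P₁ x ^ (1 - l)) ^ a := by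
  classical
  have hne : Nonempty α := by
    by_contra h
    rw [not_nonempty_iff] at h
    simp [Finset.univ_eq_empty] at hs0
  set L : α → ℝ := fun x => Real.log (P₁ x / P₀ x) with hL
  set lam : ℝ := 1 - l with hlam
  set q : α → ℝ := fun x => P₀ x ^ l * P₁ x ^ (1 - l) with hq
  set c : ℝ := ∑ x, q x with hcdef
  have hlam0 : 0 < lam := by simp [hlam]; linarith [hl.2]
  have hqpos : ∀ x, 0 < q x := fun x =>
    mul_pos (Real.rpow_pos_of_pos (h0 x) _) (Real.rpow_pos_of_pos (h1 x) _)
  have hc0 : 0 < c := Finset.sum_pos (fun x _ => hqpos x) Finset.univ_nonempty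
  have hc1 : c ≤ 1 := by
    calc c ≤ ∑ x, (l * P₀ x + (1 - l) * P₁ x) := by
          refine Finset.sum_le_sum fun x _ => ?_
          exact Real.geom_mean_le_arith_mean2_weighted hl.1.le (by linarith [hl.2])
            (h0 x).le (h1 x).le (by ring)
      _ = 1 := by rw [Finset.sum_add_distrib, ← Finset.mul_sum, ← Finset.mul_sum, hs0, hs1]; ring
  have hq_eq : ∀ x, q x = P₀ x * Real.exp (lam * L x) := by
    intro x
    have hd : 0 < P₁ x / P₀ x := div_pos (h1 x) (h0 x)
    have he : Real.exp (lam * L x) = (P₁ x / P₀ x) ^ lam := by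
      rw [Real.rpow_def_of_pos hd, mul_comm]
    rw [he, Real.div_rpow (h1 x).le (h0 x).le]
    have h2 : P₀ x ^ l = P₀ x / P₀ x ^ lam := by
      rw [show l = 1 - lam by rw [hlam]; ring, Real.rpow_sub (h0 x), Real.rpow_one]
    have h3 : P₁ x ^ (1 - l) = P₁ x ^ lam := by rw [hlam]
    simp only [hq, h2, h3]
    ring
  -- conditions and first-passage sets
  set Cond : ℕ → (Fin b → α) → Prop :=
    fun m v => 0 < ∑ j : Fin b, (if (j : ℕ) < m then L (v j) else 0) with hCond
  set D : ℕ → Finset (Fin b → α) :=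
    fun m => Finset.univ.filter (fun v => Cond m v ∧ ∀ k, a < k → k < m → ¬ Cond k v) with hD
  have hWnn : ∀ v : Fin b → α, 0 ≤ ∏ j, P₀ (v j) :=
    fun v => Finset.prod_nonneg fun j _ => (h0 _).le
  have hQnn : ∀ v : Fin b → α, 0 ≤ ∏ j, q (v j) :=
    fun v => Finset.prod_nonneg fun j _ => (hqpos _).le
  have hsubset : B ⊆ (Finset.Ioc a b).biUnion D := by
    intro v hv
    have hex' : ∃ m, a < m ∧ m ≤ b ∧ Cond m v := (hBmem v).1 hv
    let m₀ := Nat.find hex'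
    have hm₀ := Nat.find_spec hex'
    refine Finset.mem_biUnion.2 ⟨m₀, Finset.mem_Ioc.2 ⟨hm₀.1, hm₀.2.1⟩, ?_⟩
    rw [hD, Finset.mem_filter]
    refine ⟨Finset.mem_univ _, hm₀.2.2, fun k hk1 hk2 hk3 => ?_⟩
    exact Nat.find_min hex' hk2 ⟨hk1, le_trans (le_of_lt hk2) hm₀.2.1, hk3⟩
  have hdisj : (↑(Finset.Ioc a b) : Set ℕ).PairwiseDisjoint D := by
    have H : ∀ m m', a < m → m < m' → Disjoint (D m) (D m') := by
      intro m m' hm hlt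
      refine Finset.disjoint_left.2 fun v hv hv' => ?_
      rw [hD, Finset.mem_filter] at hv hv'
      exact hv'.2.2 m hm hlt hv.2.1
    intro m hm m' hm' hne'
    simp only [Finset.coe_Ioc, Set.mem_Ioc] at hm hm'
    rcases lt_or_gt_of_ne hne' with h | h
    · exact H m m' hm.1 h
    · exact (H m' m hm'.1 h).symm
  -- the per-m comparison
  have hkey : ∀ m ∈ Finset.Ioc a b,
      ∑ v ∈ D m, ∏ j, P₀ (v j) ≤ (∑ v ∈ D m, ∏ j, q (v j)) / c ^ (b - (a+1)) := by
    intro m hm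
    rw [Finset.mem_Ioc] at hm
    set p : Fin b → Prop := fun j => (j : ℕ) < m with hp
    set I : (Fin b → α) → ℝ :=
      fun v => if (Cond m v ∧ ∀ k, a < k → k < m → ¬ Cond k v) then 1 else 0 with hI
    have hIdep : ∀ v w : Fin b → α, (∀ j, p j → v j = w j) → I v = I w := by
      intro v w hvw
      have hCiff : ∀ k ≤ m, (Cond k v ↔ Cond k w) := by
        intro k hk
        have : (∑ j : Fin b, (if (j : ℕ) < k then L (v j) else 0))
            = ∑ j : Fin b, (if (j : ℕ) < k then L (w j) else 0) := by
          refine Finset.sum_congr rfl fun j _ => ?_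
          by_cases hj : (j : ℕ) < k
          · rw [if_pos hj, if_pos hj, hvw j (by exact lt_of_lt_of_le hj hk)]
          · rw [if_neg hj, if_neg hj]
        rw [hCond]; simp only []; rw [this]
      rw [hI]
      simp only []
      congr 1
      apply propext
      constructor
      · rintro ⟨h1', h2'⟩
        exact ⟨(hCiff m le_rfl).1 h1', fun k hk1 hk2 hk3 => h2' k hk1 hk2 ((hCiff k hk2.le).2 hk3)⟩
      · rintro ⟨h1', h2'⟩
        exact ⟨(hCiff m le_rfl).2 h1', fun k hk1 hk2 hk3 => h2' k hk1 hk2 ((hCiff k hk2.le).1 hk3)⟩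
    set fm : Fin b → α → ℝ := fun j x => if (j : ℕ) < m then q x else P₀ x with hfm
    -- step 1 : pointwise W ≤ ∏ fm on D m
    have hptwise : ∀ v ∈ D m, ∏ j, P₀ (v j) ≤ ∏ j, fm j (v j) := by
      intro v hv
      rw [hD, Finset.mem_filter] at hv
      have hcond := hv.2.1
      have hexp : ∏ j : Fin b, fm j (v j)
          = (∏ j, P₀ (v j)) * Real.exp (lam * ∑ j : Fin b, (if (j : ℕ) < m then L (v j) else 0)) := by
        have : ∀ j : Fin b, fm j (v j)
            = P₀ (v j) * Real.exp (if (j : ℕ) < m then lam * L (v j) else 0) := by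
          intro j
          by_cases hj : (j : ℕ) < m
          · rw [hfm]; simp only [if_pos hj]; rw [hq_eq]
          · rw [hfm]; simp only [if_neg hj]; rw [Real.exp_zero, mul_one]
        have hsum : (∑ j : Fin b, if (j : ℕ) < m then lam * L (v j) else 0)
            = lam * ∑ j : Fin b, (if (j : ℕ) < m then L (v j) else 0) := by
          rw [Finset.mul_sum]
          refine Finset.sum_congr rfl fun j _ => ?_
          by_cases hj : (j : ℕ) < m
          · rw [if_pos hj, if_pos hj]
          · rw [if_neg hj, if_neg hj, mul_zero]
        rw [Finset.prod_congr rfl fun j _ => this j, Finset.prod_mul_distrib, ← Real.exp_sum, hsum]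
      rw [hexp]
      refine le_mul_of_one_le_right (hWnn v) ?_
      rw [Real.one_le_exp_iff]
      exact le_of_lt (mul_pos hlam0 hcond)
    -- step 2 : the martingale-type identity
    have hid : (∑ v ∈ D m, ∏ j, fm j (v j)) * c ^ (b - m) = ∑ v ∈ D m, ∏ j, q (v j) := by
      have hcomp := aux_compare p I hIdep fm (fun _ x => q x)
        (fun j hj => by rw [hfm]; funext x; simp only [if_pos (show (j : ℕ) < m from hj)])
      have hsum1 : ∑ v ∈ D m, ∏ j, fm j (v j) = ∑ v : Fin b → α, I v * ∏ j, fm j (v j) := by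
        rw [hD, Finset.sum_filter]
        refine Finset.sum_congr rfl fun v _ => ?_
        rw [hI]; by_cases h : Cond m v ∧ ∀ k, a < k → k < m → ¬ Cond k v <;> simp [h]
      have hsum2 : ∑ v ∈ D m, ∏ j, q (v j) = ∑ v : Fin b → α, I v * ∏ j, q (v j) := by
        rw [hD, Finset.sum_filter]
        refine Finset.sum_congr rfl fun v _ => ?_
        rw [hI]; by_cases h : Cond m v ∧ ∀ k, a < k → k < m → ¬ Cond k v <;> simp [h]
      have hqconst : (∏ j : {j : Fin b // ¬ p j}, ∑ x, q x) = c ^ (b - m) := by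
        rw [Finset.prod_const, ← hcdef]
        congr 1
        rw [Finset.card_univ]
        exact aux_card hm.2
      have hfmconst : (∏ j : {j : Fin b // ¬ p j}, ∑ x, fm (j : Fin b) x) = 1 := by
        refine Finset.prod_eq_one fun j _ => ?_
        rw [hfm]
        simp only []
        rw [Finset.sum_congr rfl fun x _ => if_neg j.2]
        exact hs0
      rw [hsum1, hsum2, ← hqconst, hcomp, hfmconst, mul_one]
    have hcpow_pos : (0:ℝ) < c ^ (b - m) := pow_pos hc0 _
    have h1' : ∑ v ∈ D m, ∏ j, P₀ (v j) ≤ (∑ v ∈ D m, ∏ j, q (v j)) / c ^ (b - m) := by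
      rw [← hid, mul_div_cancel_right₀ _ hcpow_pos.ne']
      exact Finset.sum_le_sum hptwise
    refine h1'.trans ?_
    have hnum : 0 ≤ ∑ v ∈ D m, ∏ j, q (v j) := Finset.sum_nonneg fun v _ => hQnn v
    have hle : c ^ (b - (a+1)) ≤ c ^ (b - m) :=
      pow_le_pow_of_le_one hc0.le hc1 (by omega)
    exact div_le_div_of_nonneg_left hnum (pow_pos hc0 _) hle
  have hBQ : ∑ m ∈ Finset.Ioc a b, ∑ v ∈ D m, ∏ j, q (v j) ≤ c ^ b := by
    rw [← Finset.sum_biUnion hdisj]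
    calc ∑ v ∈ (Finset.Ioc a b).biUnion D, ∏ j, q (v j)
        ≤ ∑ v : Fin b → α, ∏ j, q (v j) :=
          Finset.sum_le_sum_of_subset_of_nonneg (Finset.subset_univ _) fun v _ _ => hQnn v
      _ = ∏ j : Fin b, ∑ x, q x := (Fintype.prod_sum fun (_ : Fin b) x => q x).symm
      _ = c ^ b := by rw [Finset.prod_const, ← hcdef, Finset.card_univ, Fintype.card_fin]
  calc ∑ v ∈ B, ∏ j, P₀ (v j)
      ≤ ∑ v ∈ (Finset.Ioc a b).biUnion D, ∏ j, P₀ (v j) :=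
        Finset.sum_le_sum_of_subset_of_nonneg hsubset fun v _ _ => hWnn v
    _ = ∑ m ∈ Finset.Ioc a b, ∑ v ∈ D m, ∏ j, P₀ (v j) := Finset.sum_biUnion hdisj
    _ ≤ ∑ m ∈ Finset.Ioc a b, (∑ v ∈ D m, ∏ j, q (v j)) / c ^ (b - (a+1)) :=
        Finset.sum_le_sum hkey
    _ = (∑ m ∈ Finset.Ioc a b, ∑ v ∈ D m, ∏ j, q (v j)) / c ^ (b - (a+1)) :=
        (Finset.sum_div _ _ _).symm
    _ ≤ c ^ b / c ^ (b - (a+1)) := by gcongr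
    _ = c ^ (a+1) := by
        have hb : c ^ b = c ^ (b - (a+1)) * c ^ (a+1) := by rw [← pow_add]; congr 1; omega
        rw [hb, mul_div_cancel_left₀ _ (pow_ne_zero _ hc0.ne')]
    _ ≤ c ^ a := pow_le_pow_of_le_one hc0.le hc1 (Nat.le_succ a)

end

open MeasureTheory ProbabilityTheory

/-- Let P₀, P₁ be distributions on a finite alphabet with common (full)
support and Chernoff information I_ch(P₀,P₁) = −min_{λ∈(0,1)} log Σ_x P₀(x)^λ P₁(x)^{1−λ} > 0.
With S_m = Σ_{j=1}^m log(P₁(X_j)/P₀(X_j)), X_j i.i.d. ∼ P₀, for any integers 0 < a < b,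
P(max_{a < m ≤ b} S_m > 0) ≤ exp(−a · I_ch(P₀,P₁)). -/
theorem stmt_11 {Ω : Type*} {mΩ : MeasurableSpace Ω} (μ : Measure Ω) [IsProbabilityMeasure μ]
    {α : Type*} [Fintype α] [MeasurableSpace α] [MeasurableSingletonClass α]
    (P₀ P₁ : α → ℝ) (h0 : ∀ x, 0 < P₀ x) (h1 : ∀ x, 0 < P₁ x)
    (hs0 : ∑ x, P₀ x = 1) (hs1 : ∑ x, P₁ x = 1)
    (Ich : ℝ)
    (hIch : Ich = -(⨅ l ∈ Set.Ioo (0 : ℝ) 1, Real.log (∑ x, P₀ x ^ l * P₁ x ^ (1 - l))))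
    (hIchpos : 0 < Ich)
    (Xs : ℕ → Ω → α) (hXmeas : ∀ j, Measurable (Xs j))
    (hindep : iIndepFun Xs μ)
    (hlaw : ∀ j x, μ (Xs j ⁻¹' {x}) = ENNReal.ofReal (P₀ x))
    (a b : ℕ) (ha : 0 < a) (hab : a < b) :
    μ {ω | ∃ m ∈ Finset.Ioc a b,
        0 < ∑ j ∈ Finset.range m, Real.log (P₁ (Xs j ω) / P₀ (Xs j ω))}
      ≤ ENNReal.ofReal (Real.exp (-(a : ℝ) * Ich)) := by
  classical
  have hne : Nonempty α := by
    by_contra h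
    rw [not_nonempty_iff] at h
    simp [Finset.univ_eq_empty] at hs0
  -- the finite tuple event
  set B : Finset (Fin b → α) := Finset.univ.filter (fun v : Fin b → α => ∃ m, a < m ∧ m ≤ b ∧
      0 < ∑ j : Fin b, (if (j : ℕ) < m then Real.log (P₁ (v j) / P₀ (v j)) else 0)) with hBdef
  have hBmem : ∀ v : Fin b → α, v ∈ B ↔ ∃ m, a < m ∧ m ≤ b ∧
      0 < ∑ j : Fin b, (if (j : ℕ) < m then Real.log (P₁ (v j) / P₀ (v j)) else 0) := by
    intro v; rw [hBdef, Finset.mem_filter]; simp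
  set vext : (Fin b → α) → ℕ → α :=
    fun v i => if h : i < b then v ⟨i, h⟩ else Classical.arbitrary α with hvext
  set A : (Fin b → α) → Set Ω := fun v => ⋂ i ∈ Finset.range b, Xs i ⁻¹' {vext v i} with hAdef
  have hA_eq : ∀ v, A v = {ω | ∀ j : Fin b, Xs (j : ℕ) ω = v j} := by
    intro v
    ext ω
    simp only [hAdef, Set.mem_iInter, Set.mem_preimage, Set.mem_singleton_iff,
      Finset.mem_range, Set.mem_setOf_eq]
    constructor
    · intro h j
      have := h (j : ℕ) j.2
      simpa only [hvext, dif_pos j.2, Fin.eta] using this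
    · intro h i hi
      have := h ⟨i, hi⟩
      simp only [hvext, dif_pos hi]
      exact this
  have hsum_eq : ∀ (m : ℕ), m ≤ b → ∀ (g : ℕ → α),
      ∑ j ∈ Finset.range m, Real.log (P₁ (g j) / P₀ (g j))
        = ∑ j : Fin b, (if (j : ℕ) < m then Real.log (P₁ (g (j : ℕ)) / P₀ (g (j : ℕ))) else 0) := by
    intro m hm g
    rw [Fin.sum_univ_eq_sum_range (fun j => if j < m then Real.log (P₁ (g j) / P₀ (g j)) else 0) b,
      ← Finset.sum_filter]
    congr 1
    ext j
    simp only [Finset.mem_filter, Finset.mem_range]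
    omega
  have hEvent : {ω | ∃ m ∈ Finset.Ioc a b,
      0 < ∑ j ∈ Finset.range m, Real.log (P₁ (Xs j ω) / P₀ (Xs j ω))} = ⋃ v ∈ B, A v := by
    ext ω
    simp only [Set.mem_setOf_eq, Set.mem_iUnion, exists_prop, Finset.mem_Ioc]
    constructor
    · rintro ⟨m, ⟨hm1, hm2⟩, hpos⟩
      refine ⟨fun j => Xs (j : ℕ) ω, ?_, ?_⟩
      · rw [hBmem]
        refine ⟨m, hm1, hm2, ?_⟩
        show 0 < ∑ j : Fin b,
          (if (j : ℕ) < m then Real.log (P₁ (Xs (j : ℕ) ω) / P₀ (Xs (j : ℕ) ω)) else 0)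
        rw [← hsum_eq m hm2 (fun i => Xs i ω)]
        exact hpos
      · have hmm := hA_eq (fun j : Fin b => Xs (j : ℕ) ω)
        exact hmm ▸ (fun j => rfl)
    · rintro ⟨v, hvB, hωA⟩
      rw [hA_eq] at hωA
      rw [hBmem] at hvB
      obtain ⟨m, hm1, hm2, hpos⟩ := hvB
      refine ⟨m, ⟨hm1, hm2⟩, ?_⟩
      rw [hsum_eq m hm2 (fun i => Xs i ω)]
      have : ∀ j : Fin b, P₁ (Xs (j : ℕ) ω) / P₀ (Xs (j : ℕ) ω) = P₁ (v j) / P₀ (v j) := by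
        intro j; rw [hωA j]
      calc (0:ℝ) < ∑ j : Fin b, (if (j : ℕ) < m then Real.log (P₁ (v j) / P₀ (v j)) else 0) := hpos
        _ = _ := by
            refine Finset.sum_congr rfl fun j _ => ?_
            rw [this j]
  have hAmeas : ∀ v, MeasurableSet (A v) := by
    intro v
    rw [hAdef]
    exact Finset.measurableSet_biInter _ fun i _ => (hXmeas i) (measurableSet_singleton _)
  have hAdisj : (↑B : Set (Fin b → α)).PairwiseDisjoint A := by
    intro v _ w _ hvw
    refine Set.disjoint_left.2 fun ω hv hw => hvw ?_
    rw [hA_eq] at hv hw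
    funext j
    rw [← hv j, ← hw j]
  have hAval : ∀ v : Fin b → α, μ (A v) = ENNReal.ofReal (∏ j : Fin b, P₀ (v j)) := by
    intro v
    rw [hAdef]
    rw [hindep.measure_inter_preimage_eq_mul (Finset.range b)
      (sets := fun i => {vext v i}) (fun i _ => measurableSet_singleton _)]
    have : ∀ i ∈ Finset.range b, μ (Xs i ⁻¹' {vext v i}) = ENNReal.ofReal (P₀ (vext v i)) :=
      fun i _ => hlaw i _
    rw [Finset.prod_congr rfl this,
      ← ENNReal.ofReal_prod_of_nonneg (fun i _ => (h0 (vext v i)).le)]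
    congr 1
    rw [← Fin.prod_univ_eq_prod_range (fun i => P₀ (vext v i)) b]
    refine Finset.prod_congr rfl fun j _ => ?_
    simp only [hvext, dif_pos j.2, Fin.eta]
  have hμ : μ {ω | ∃ m ∈ Finset.Ioc a b,
      0 < ∑ j ∈ Finset.range m, Real.log (P₁ (Xs j ω) / P₀ (Xs j ω))}
      = ENNReal.ofReal (∑ v ∈ B, ∏ j : Fin b, P₀ (v j)) := by
    rw [hEvent, measure_biUnion_finset hAdisj (fun v _ => hAmeas v),
      Finset.sum_congr rfl (fun v _ => hAval v),
      ← ENNReal.ofReal_sum_of_nonneg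
        (fun v _ => Finset.prod_nonneg fun j _ => (h0 (v j)).le)]
  rw [hμ]
  refine ENNReal.ofReal_le_ofReal ?_
  -- now the real inequality via stepB and the infimum
  set f : ℝ → ℝ := fun l => Real.log (∑ x, P₀ x ^ l * P₁ x ^ (1 - l)) with hf
  have hIch' : Ich = -(⨅ l ∈ Set.Ioo (0 : ℝ) 1, f l) := hIch
  set Sinf : ℝ := ⨅ l ∈ Set.Ioo (0 : ℝ) 1, f l with hSinf
  have hcpos : ∀ l : ℝ, 0 < ∑ x, P₀ x ^ l * P₁ x ^ (1 - l) := by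
    intro l
    exact Finset.sum_pos (fun x _ => mul_pos (Real.rpow_pos_of_pos (h0 x) _)
      (Real.rpow_pos_of_pos (h1 x) _)) Finset.univ_nonempty
  have hcle1 : ∀ l ∈ Set.Ioo (0:ℝ) 1, (∑ x, P₀ x ^ l * P₁ x ^ (1 - l)) ≤ 1 := by
    intro l hl
    calc (∑ x, P₀ x ^ l * P₁ x ^ (1 - l)) ≤ ∑ x, (l * P₀ x + (1 - l) * P₁ x) := by
          refine Finset.sum_le_sum fun x _ => ?_
          exact Real.geom_mean_le_arith_mean2_weighted hl.1.le (by linarith [hl.2])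
            (h0 x).le (h1 x).le (by ring)
      _ = 1 := by rw [Finset.sum_add_distrib, ← Finset.mul_sum, ← Finset.mul_sum, hs0, hs1]; ring
  have hfle0 : ∀ l ∈ Set.Ioo (0:ℝ) 1, f l ≤ 0 := by
    intro l hl
    exact Real.log_nonpos (hcpos l).le (hcle1 l hl)
  have hstep : ∀ l ∈ Set.Ioo (0:ℝ) 1,
      ∑ v ∈ B, ∏ j : Fin b, P₀ (v j) ≤ Real.exp ((a : ℝ) * f l) := by
    intro l hl
    have h := stepB P₀ P₁ h0 h1 hs0 hs1 a b ha hab l hl B (fun v => hBmem v)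
    calc ∑ v ∈ B, ∏ j : Fin b, P₀ (v j) ≤ (∑ x, P₀ x ^ l * P₁ x ^ (1 - l)) ^ a := h
      _ = Real.exp ((a : ℝ) * f l) := by
          rw [hf, Real.exp_nat_mul, Real.exp_log (hcpos l)]
  have happrox : ∀ ε > 0, ∃ l ∈ Set.Ioo (0:ℝ) 1, f l < Sinf + ε := by
    intro ε hε
    have h3 : (⨅ l : ℝ, ⨅ _ : l ∈ Set.Ioo (0:ℝ) 1, f l) < Sinf + ε := by
      rw [hSinf] at *; exact lt_of_le_of_lt (le_refl _) (by linarith)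
    obtain ⟨l, hl⟩ := exists_lt_of_ciInf_lt h3
    by_cases hmem : l ∈ Set.Ioo (0:ℝ) 1
    · exact ⟨l, hmem, by rwa [ciInf_pos hmem] at hl⟩
    · have h0' : (⨅ _ : l ∈ Set.Ioo (0:ℝ) 1, f l) = 0 := by
        haveI : IsEmpty (l ∈ Set.Ioo (0:ℝ) 1) := ⟨hmem⟩
        exact Real.iInf_of_isEmpty _
      rw [h0'] at hl
      refine ⟨1/2, by norm_num, ?_⟩
      have := hfle0 (1/2) (by norm_num)
      linarith
  have hfinal : ∑ v ∈ B, ∏ j : Fin b, P₀ (v j) ≤ Real.exp ((a : ℝ) * Sinf) := by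
    by_contra hcon
    push_neg at hcon
    set T : ℝ := ∑ v ∈ B, ∏ j : Fin b, P₀ (v j) with hT
    have hT0 : 0 < T := lt_trans (Real.exp_pos _) hcon
    have hlog : (a : ℝ) * Sinf < Real.log T := (Real.lt_log_iff_exp_lt hT0).2 hcon
    have hapos : (0:ℝ) < (a : ℝ) := by exact_mod_cast ha
    set ε : ℝ := (Real.log T - (a : ℝ) * Sinf) / (2 * a) with hεdef
    have hεpos : 0 < ε := by
      rw [hεdef]
      apply div_pos (by linarith) (by positivity)
    obtain ⟨l, hl, hfl⟩ := happrox ε hεpos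
    have h1' : T ≤ Real.exp ((a : ℝ) * f l) := hstep l hl
    have h2' : (a : ℝ) * f l < (a : ℝ) * (Sinf + ε) := by
      exact mul_lt_mul_of_pos_left hfl hapos
    have h3' : (a : ℝ) * (Sinf + ε) < Real.log T := by
      have : (a : ℝ) * ε = (Real.log T - (a : ℝ) * Sinf) / 2 := by
        rw [hεdef]; field_simp
      nlinarith
    have : T < T := by
      calc T ≤ Real.exp ((a : ℝ) * f l) := h1'
        _ < Real.exp (Real.log T) := Real.exp_lt_exp.2 (lt_trans h2' h3')
        _ = T := Real.exp_log hT0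
    exact lt_irrefl _ this
  calc ∑ v ∈ B, ∏ j : Fin b, P₀ (v j) ≤ Real.exp ((a : ℝ) * Sinf) := hfinal
    _ = Real.exp (-(a : ℝ) * Ich) := by rw [hIch']; ring_nf
end

section
/- Fix a finite alphabet X, a channel column r : X → [0,∞), a nonconstant likelihood-ratio vector s : X → [m, M] with 0 < m < M, and a probability vector p on X. Define F(s, p) = log( E_p[r·s] / (E_p[r] E_p[s]) ). Then for fixed p with E_p[r] > 0, the function s ↦ F(s,p) on the box [m,M]^X attains its maximum at a vertex, i.e. at some s* with s*(x) ∈ {m, M} for every x. -/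
/-- Möbius (linear-fractional) functions on an interval are maximized at an endpoint. -/
lemma mobius_max {a A b B t m M : ℝ} (ht : t ∈ Set.Icc m M)
    (hm : 0 < B + b * m) (hM : 0 < B + b * M) (htpos : 0 < B + b * t) :
    (A + a * t) / (B + b * t) ≤
      max ((A + a * m) / (B + b * m)) ((A + a * M) / (B + b * M)) := by
  obtain ⟨h1, h2⟩ := ht
  rcases le_total 0 (a * B - A * b) with hD | hD
  · refine le_max_of_le_right ?_
    rw [div_le_div_iff₀ htpos hM]
    nlinarith [mul_nonneg hD (sub_nonneg.2 h2)]
  · refine le_max_of_le_left ?_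
    rw [div_le_div_iff₀ htpos hm]
    nlinarith [mul_nonneg (neg_nonneg.2 hD) (sub_nonneg.2 h1)]

/-- For a finite alphabet X, nonnegative r : X → ℝ, 0 < m < M, and a
probability vector p with E_p[r] > 0, the function
s ↦ F(s,p) = log(E_p[r·s] / (E_p[r] E_p[s])) on the box [m,M]^X attains its maximum at
a vertex, i.e. at some s* with s*(x) ∈ {m, M} for every x. -/
theorem stmt_15 {X : Type*} [Fintype X] [Nonempty X]
    (r : X → ℝ) (hr : ∀ x, 0 ≤ r x)
    (m M : ℝ) (hm : 0 < m) (hmM : m < M)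
    (p : X → ℝ) (hp : ∀ x, 0 ≤ p x) (hps : ∑ x, p x = 1)
    (hEr : 0 < ∑ x, r x * p x) :
    ∃ s' : X → ℝ, (∀ x, s' x = m ∨ s' x = M) ∧
      ∀ s : X → ℝ, (∀ x, s x ∈ Set.Icc m M) →
        Real.log ((∑ x, r x * s x * p x) / ((∑ x, r x * p x) * (∑ x, s x * p x)))
          ≤ Real.log ((∑ x, r x * s' x * p x) / ((∑ x, r x * p x) * (∑ x, s' x * p x))) := by
  classical
  set C : ℝ := ∑ x, r x * p x with hC
  set N : (X → ℝ) → ℝ := fun s => ∑ x, r x * s x * p x with hN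
  set D : (X → ℝ) → ℝ := fun s => ∑ x, s x * p x with hD
  set f : (X → ℝ) → ℝ := fun s => N s / D s with hf
  -- positivity facts on the box
  have hDpos : ∀ s : X → ℝ, (∀ x, s x ∈ Set.Icc m M) → 0 < D s := by
    intro s hs
    have h1 : m * 1 ≤ D s := by
      rw [← hps, Finset.mul_sum]
      exact Finset.sum_le_sum fun x _ => mul_le_mul_of_nonneg_right (hs x).1 (hp x)
    linarith
  have hNpos : ∀ s : X → ℝ, (∀ x, s x ∈ Set.Icc m M) → 0 < N s := by
    intro s hs
    have h1 : m * C ≤ N s := by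
      rw [hC, Finset.mul_sum]
      refine Finset.sum_le_sum fun x _ => ?_
      have := mul_le_mul_of_nonneg_left (hs x).1 (hr x)
      nlinarith [hp x, hr x, (hs x).1]
    nlinarith
  -- sum decomposition under update
  have keyN : ∀ (s : X → ℝ) (x₀ : X) (t : ℝ),
      N (Function.update s x₀ t) =
        (∑ x ∈ {x₀}ᶜ, r x * s x * p x) + (r x₀ * p x₀) * t := by
    intro s x₀ t
    rw [hN]
    simp only []
    rw [Fintype.sum_eq_add_sum_compl x₀]
    rw [Function.update_self, add_comm]
    congr 1
    · refine Finset.sum_congr rfl fun x hx => ?_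
      rw [Function.update_of_ne (by simpa using Finset.mem_compl.1 hx)]
    · ring
  have keyD : ∀ (s : X → ℝ) (x₀ : X) (t : ℝ),
      D (Function.update s x₀ t) =
        (∑ x ∈ {x₀}ᶜ, s x * p x) + (p x₀) * t := by
    intro s x₀ t
    rw [hD]
    simp only []
    rw [Fintype.sum_eq_add_sum_compl x₀]
    rw [Function.update_self, add_comm]
    congr 1
    · refine Finset.sum_congr rfl fun x hx => ?_
      rw [Function.update_of_ne (by simpa using Finset.mem_compl.1 hx)]
    · ring
  have hbox_update : ∀ (s : X → ℝ), (∀ x, s x ∈ Set.Icc m M) → ∀ (x₀ : X) (t : ℝ),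
      t ∈ Set.Icc m M → ∀ x, Function.update s x₀ t x ∈ Set.Icc m M := by
    intro s hs x₀ t ht x
    by_cases hx : x = x₀
    · subst hx; rw [Function.update_self]; exact ht
    · rw [Function.update_of_ne hx]; exact hs x
  -- main induction: push coordinates in T to endpoints without decreasing f
  have main : ∀ T : Finset X, ∀ s : X → ℝ, (∀ x, s x ∈ Set.Icc m M) →
      ∃ s' : X → ℝ, (∀ x, s' x ∈ Set.Icc m M) ∧ (∀ x ∈ T, s' x = m ∨ s' x = M) ∧
        f s ≤ f s' := by
    intro T
    induction T using Finset.induction_on with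
    | empty => intro s hs; exact ⟨s, hs, by simp, le_rfl⟩
    | @insert x₀ T hx₀ IH =>
      intro s hs
      obtain ⟨s₁, hs₁box, hs₁vert, hs₁le⟩ := IH s hs
      set A : ℝ := ∑ x ∈ {x₀}ᶜ, r x * s₁ x * p x with hA
      set B : ℝ := ∑ x ∈ {x₀}ᶜ, s₁ x * p x with hB
      have hmem : ∀ t : ℝ, t ∈ Set.Icc m M → 0 < B + p x₀ * t := by
        intro t ht
        have := hDpos (Function.update s₁ x₀ t) (hbox_update s₁ hs₁box x₀ t ht)
        rwa [keyD s₁ x₀ t] at this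
      have hmIcc : m ∈ Set.Icc m M := ⟨le_refl m, le_of_lt hmM⟩
      have hMIcc : M ∈ Set.Icc m M := ⟨le_of_lt hmM, le_refl M⟩
      have hbound : f s₁ ≤
          max (f (Function.update s₁ x₀ m)) (f (Function.update s₁ x₀ M)) := by
        have h0 : f s₁ = f (Function.update s₁ x₀ (s₁ x₀)) := by
          rw [Function.update_eq_self]
        rw [h0, hf]
        simp only []
        rw [keyN s₁ x₀, keyN s₁ x₀, keyN s₁ x₀, keyD s₁ x₀, keyD s₁ x₀, keyD s₁ x₀]
        exact mobius_max (hs₁box x₀) (hmem m hmIcc) (hmem M hMIcc)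
          (hmem (s₁ x₀) (hs₁box x₀))
      rcases le_total (f (Function.update s₁ x₀ M)) (f (Function.update s₁ x₀ m)) with h | h
      · refine ⟨Function.update s₁ x₀ m, hbox_update s₁ hs₁box x₀ m hmIcc, ?_, ?_⟩
        · intro x hx
          rcases Finset.mem_insert.1 hx with h1 | h1
          · subst h1; left; rw [Function.update_self]
          · rw [Function.update_of_ne (by rintro rfl; exact hx₀ h1)]
            exact hs₁vert x h1
        · exact le_trans hs₁le (le_trans hbound (by rw [max_eq_left h]))
      · refine ⟨Function.update s₁ x₀ M, hbox_update s₁ hs₁box x₀ M hMIcc, ?_, ?_⟩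
        · intro x hx
          rcases Finset.mem_insert.1 hx with h1 | h1
          · subst h1; right; rw [Function.update_self]
          · rw [Function.update_of_ne (by rintro rfl; exact hx₀ h1)]
            exact hs₁vert x h1
        · exact le_trans hs₁le (le_trans hbound (by rw [max_eq_right h]))
  -- compactness: f attains its max on the box
  set S : Set (X → ℝ) := Set.pi Set.univ (fun _ => Set.Icc m M) with hS
  have hScomp : IsCompact S := isCompact_univ_pi fun _ => isCompact_Icc
  have hSne : S.Nonempty := ⟨fun _ => m, fun x _ => ⟨le_refl m, le_of_lt hmM⟩⟩
  have hmemS : ∀ s : X → ℝ, (∀ x, s x ∈ Set.Icc m M) ↔ s ∈ S := by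
    intro s
    constructor
    · intro h x _; exact h x
    · intro h x; exact h x (Set.mem_univ x)
  have hcontN : Continuous N := by
    apply continuous_finset_sum
    intro x _
    exact (continuous_const.mul (continuous_apply x)).mul continuous_const
  have hcontD : Continuous D := by
    apply continuous_finset_sum
    intro x _
    exact (continuous_apply x).mul continuous_const
  have hcont : ContinuousOn f S := by
    apply ContinuousOn.div hcontN.continuousOn hcontD.continuousOn
    intro s hsS
    exact ne_of_gt (hDpos s ((hmemS s).2 hsS))
  obtain ⟨s₀, hs₀S, hmax⟩ := hScomp.exists_isMaxOn hSne hcont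
  obtain ⟨s', hs'box, hs'vert, hs'le⟩ := main Finset.univ s₀ ((hmemS s₀).2 hs₀S)
  refine ⟨s', fun x => hs'vert x (Finset.mem_univ x), ?_⟩
  intro s hsbox
  have h1 : f s ≤ f s' := le_trans (hmax ((hmemS s).1 hsbox)) hs'le
  have heq : ∀ u : X → ℝ, N u / (C * D u) = f u / C := by
    intro u
    rw [hf]
    simp only []
    rw [mul_comm, ← div_div, div_right_comm]
  have h2 : N s / (C * D s) ≤ N s' / (C * D s') := by
    rw [heq s, heq s']
    gcongr
  have h3 : 0 < N s / (C * D s) := by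
    apply div_pos (hNpos s hsbox)
    exact mul_pos hEr (hDpos s hsbox)
  exact Real.log_le_log h3 h2
end

section
/- Fix ρ ∈ (1, ∞), a channel W : X → Y between finite alphabets, and distributions P₀ ≪≫ P₁ on X. On the set S(P₀,P₁) = {P̂₁ probability on X : Σ_x (P₀(x)/P₁(x)) P̂₁(x) = 1}, define g(P̂₁) = Σ_y (Σ_x (P₀(x)/P₁(x)) P̂₁(x) W(y|x))^ρ (Σ_x P̂₁(x) W(y|x))^{1−ρ} − (Σ_x (P₀(x)/P₁(x))^ρ P̂₁(x))^λ for a fixed λ ∈ (0,1). Then g is a convex function of P̂₁ on S(P₀,P₁), and hence attains its maximum at an extreme point of S(P₀,P₁), which is supported on at most two atoms. -/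
open Set Finset Real


lemma persp_ineq {ρ : ℝ} (hρ : 1 < ρ) {t s A1 B1 A2 B2 : ℝ}
    (ht : 0 ≤ t) (hs : 0 ≤ s) (hts : t + s = 1)
    (hA1 : 0 ≤ A1) (hA2 : 0 ≤ A2) (hB1 : 0 ≤ B1) (hB2 : 0 ≤ B2)
    (h1 : B1 = 0 → A1 = 0) (h2 : B2 = 0 → A2 = 0) :
    (t*A1+s*A2) ^ ρ * (t*B1+s*B2) ^ (1-ρ) ≤
      t * (A1 ^ ρ * B1 ^ (1-ρ)) + s * (A2 ^ ρ * B2 ^ (1-ρ)) := by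
  have hρ0 : (0:ℝ) < ρ := lt_trans one_pos hρ
  have hρ1 : 1 - ρ ≠ 0 := by intro h; linarith [sub_eq_zero.mp h]
  have hRHS0 : 0 ≤ t * (A1 ^ ρ * B1 ^ (1-ρ)) + s * (A2 ^ ρ * B2 ^ (1-ρ)) := by positivity
  rcases eq_or_lt_of_le (by positivity : (0:ℝ) ≤ t*B1+s*B2) with hB | hB
  · rw [← hB, Real.zero_rpow hρ1, mul_zero]; exact hRHS0
  rcases eq_or_lt_of_le hB1 with hB1z | hB1p
  · -- B1 = 0
    have hA1z : A1 = 0 := h1 hB1z.symm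
    have hsB2 : 0 < s * B2 := by nlinarith
    have hsp : 0 < s := by
      rcases eq_or_lt_of_le hs with h | h
      · exfalso; rw [← h, zero_mul] at hsB2; exact lt_irrefl 0 hsB2
      · exact h
    have hB2p : 0 < B2 := by nlinarith
    rw [hA1z, ← hB1z, mul_zero, zero_add, zero_add, Real.zero_rpow (ne_of_gt hρ0), zero_mul,
      mul_zero, zero_add, Real.mul_rpow hs hA2, Real.mul_rpow hs hB2]
    have : s ^ ρ * A2 ^ ρ * (s ^ (1-ρ) * B2 ^ (1-ρ)) = (s ^ ρ * s ^ (1-ρ)) * (A2 ^ ρ * B2 ^ (1-ρ)) := by ring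
    rw [this, ← Real.rpow_add hsp, show ρ + (1-ρ) = 1 by ring, Real.rpow_one]
  rcases eq_or_lt_of_le hB2 with hB2z | hB2p
  · -- B2 = 0
    have hA2z : A2 = 0 := h2 hB2z.symm
    have htB1 : 0 < t * B1 := by nlinarith
    have htp : 0 < t := by
      rcases eq_or_lt_of_le ht with h | h
      · exfalso; rw [← h, zero_mul] at htB1; exact lt_irrefl 0 htB1
      · exact h
    rw [hA2z, ← hB2z, mul_zero, add_zero, add_zero, Real.zero_rpow (ne_of_gt hρ0), zero_mul,
      mul_zero, add_zero, Real.mul_rpow ht hA1, Real.mul_rpow ht hB1]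
    have : t ^ ρ * A1 ^ ρ * (t ^ (1-ρ) * B1 ^ (1-ρ)) = (t ^ ρ * t ^ (1-ρ)) * (A1 ^ ρ * B1 ^ (1-ρ)) := by ring
    rw [this, ← Real.rpow_add htp, show ρ + (1-ρ) = 1 by ring, Real.rpow_one]
  · -- main case: 0 < B1, 0 < B2
    set Bb := t*B1+s*B2 with hBb
    set Ab := t*A1+s*A2 with hAb
    have hAb0 : 0 ≤ Ab := by positivity
    have hw1 : 0 ≤ t*B1/Bb := by positivity
    have hw2 : 0 ≤ s*B2/Bb := by positivity
    have hwsum : t*B1/Bb + s*B2/Bb = 1 := by field_simp; linarith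
    have J := (convexOn_rpow (le_of_lt hρ)).2 (Set.mem_Ici.2 (div_nonneg hA1 hB1p.le))
      (Set.mem_Ici.2 (div_nonneg hA2 hB2p.le)) hw1 hw2 hwsum
    simp only [smul_eq_mul] at J
    have e1 : t*B1/Bb * (A1/B1) + s*B2/Bb * (A2/B2) = Ab / Bb := by
      field_simp; ring
    rw [e1] at J
    have hmul := mul_le_mul_of_nonneg_left J hB.le
    have hBρ := Real.rpow_pos_of_pos hB ρ
    have hB1ρ := Real.rpow_pos_of_pos hB1p ρ
    have hB2ρ := Real.rpow_pos_of_pos hB2p ρ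
    have eL : Ab ^ ρ * Bb ^ (1-ρ) = Bb * (Ab/Bb) ^ ρ := by
      rw [Real.div_rpow hAb0 hB.le, Real.rpow_sub hB, Real.rpow_one]
      field_simp
    have eR : Bb * (t*B1/Bb * (A1/B1) ^ ρ + s*B2/Bb * (A2/B2) ^ ρ)
        = t * (A1 ^ ρ * B1 ^ (1-ρ)) + s * (A2 ^ ρ * B2 ^ (1-ρ)) := by
      rw [Real.div_rpow hA1 hB1p.le, Real.div_rpow hA2 hB2p.le,
        Real.rpow_sub hB1p, Real.rpow_sub hB2p, Real.rpow_one, Real.rpow_one]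
      field_simp
    rw [eL, ← eR]; exact hmul


set_option maxHeartbeats 1000000 in
/-- For ρ ∈ (1,∞), λ ∈ (0,1), a channel W : X → Y, and P₀ ≪≫ P₁, the
function g on S(P₀,P₁) defined by
g(P̂₁) = Σ_y (Σ_x (P₀(x)/P₁(x)) P̂₁(x) W(y|x))^ρ (Σ_x P̂₁(x) W(y|x))^{1−ρ}
        − (Σ_x (P₀(x)/P₁(x))^ρ P̂₁(x))^λ
is convex on S(P₀,P₁), and hence attains its maximum at an extreme point of S(P₀,P₁),
which is supported on at most two atoms. -/
theorem stmt_17 {X Y : Type*} [Fintype X] [Fintype Y]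
    (ρ lam : ℝ) (hρ : 1 < ρ) (hlam : lam ∈ Set.Ioo (0 : ℝ) 1)
    (W : X → Y → ℝ) (hW : ∀ x y, 0 ≤ W x y) (hWrow : ∀ x, ∑ y, W x y = 1)
    (P₀ P₁ : X → ℝ) (h0 : ∀ x, 0 < P₀ x) (h1 : ∀ x, 0 < P₁ x)
    (hs0 : ∑ x, P₀ x = 1) (hs1 : ∑ x, P₁ x = 1)
    (S : Set (X → ℝ))
    (hS : S = {q | (∀ x, 0 ≤ q x) ∧ (∑ x, q x = 1) ∧ ∑ x, (P₀ x / P₁ x) * q x = 1})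
    (g : (X → ℝ) → ℝ)
    (hg : ∀ q, g q =
        (∑ y, (∑ x, (P₀ x / P₁ x) * q x * W x y) ^ ρ * (∑ x, q x * W x y) ^ (1 - ρ))
          - (∑ x, (P₀ x / P₁ x) ^ ρ * q x) ^ lam) :
    ConvexOn ℝ S g ∧
      ∃ q' ∈ Set.extremePoints ℝ S, Set.ncard {x | q' x ≠ 0} ≤ 2 ∧ ∀ q ∈ S, g q ≤ g q' := by
  classical
  obtain ⟨hlam0, hlam1⟩ := hlam
  set c : X → ℝ := fun x => P₀ x / P₁ x with hc
  have hcpos : ∀ x, 0 < c x := fun x => div_pos (h0 x) (h1 x)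
  obtain rfl : S = {q | (∀ x, 0 ≤ q x) ∧ (∑ x, q x = 1) ∧ ∑ x, c x * q x = 1} := hS
  set S : Set (X → ℝ) := {q | (∀ x, 0 ≤ q x) ∧ (∑ x, q x = 1) ∧ ∑ x, c x * q x = 1} with hS'
  obtain rfl : g = fun q =>
      (∑ y, (∑ x, c x * q x * W x y) ^ ρ * (∑ x, q x * W x y) ^ (1 - ρ))
        - (∑ x, c x ^ ρ * q x) ^ lam := funext hg
  set g : (X → ℝ) → ℝ := fun q =>
      (∑ y, (∑ x, c x * q x * W x y) ^ ρ * (∑ x, q x * W x y) ^ (1 - ρ))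
        - (∑ x, c x ^ ρ * q x) ^ lam with hg'
  -- S is convex
  have hSconv : Convex ℝ S := by
    rintro q1 ⟨hq1n, hq1s, hq1c⟩ q2 ⟨hq2n, hq2s, hq2c⟩ a b ha hb hab
    refine ⟨fun x => by
      have := hq1n x; have := hq2n x
      simp only [Pi.add_apply, Pi.smul_apply, smul_eq_mul]; positivity, ?_, ?_⟩
    · simp only [Pi.add_apply, Pi.smul_apply, smul_eq_mul]
      rw [Finset.sum_add_distrib, ← Finset.mul_sum, ← Finset.mul_sum, hq1s, hq2s]
      linarith
    · simp only [Pi.add_apply, Pi.smul_apply, smul_eq_mul]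
      calc ∑ x, c x * (a * q1 x + b * q2 x)
          = a * (∑ x, c x * q1 x) + b * (∑ x, c x * q2 x) := by
            rw [Finset.mul_sum, Finset.mul_sum, ← Finset.sum_add_distrib]
            exact Finset.sum_congr rfl fun x _ => by ring
        _ = 1 := by rw [hq1c, hq2c]; linarith
  -- P₁ ∈ S
  have hP₁S : P₁ ∈ S := by
    refine ⟨fun x => (h1 x).le, hs1, ?_⟩
    rw [← hs0]
    exact Finset.sum_congr rfl fun x _ => div_mul_cancel₀ (P₀ x) (ne_of_gt (h1 x))
  have hρ1' : 1 - ρ ≠ 0 := by intro h; linarith [sub_eq_zero.mp h]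
  have hρ0 : (0:ℝ) < ρ := lt_trans one_pos hρ
  have hgconv : ConvexOn ℝ S g := by
    have hsum : ConvexOn ℝ S (fun q =>
        ∑ y, (∑ x, c x * q x * W x y) ^ ρ * (∑ x, q x * W x y) ^ (1-ρ)) := by
      refine ⟨hSconv, ?_⟩
      rintro q1 hq1 q2 hq2 a b ha hb hab
      simp only [smul_eq_mul, Pi.add_apply, Pi.smul_apply]
      rw [Finset.mul_sum, Finset.mul_sum, ← Finset.sum_add_distrib]
      refine Finset.sum_le_sum fun y _ => ?_
      have eA : ∑ x, c x * (a * q1 x + b * q2 x) * W x y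
          = a * (∑ x, c x * q1 x * W x y) + b * (∑ x, c x * q2 x * W x y) := by
        rw [Finset.mul_sum, Finset.mul_sum, ← Finset.sum_add_distrib]
        exact Finset.sum_congr rfl fun x _ => by ring
      have eB : ∑ x, (a * q1 x + b * q2 x) * W x y
          = a * (∑ x, q1 x * W x y) + b * (∑ x, q2 x * W x y) := by
        rw [Finset.mul_sum, Finset.mul_sum, ← Finset.sum_add_distrib]
        exact Finset.sum_congr rfl fun x _ => by ring
      rw [eA, eB]
      have hA1 : 0 ≤ ∑ x, c x * q1 x * W x y := Finset.sum_nonneg fun x _ => by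
        have h1 := hq1.1 x; have h2 := (hcpos x).le; have h3 := hW x y; positivity
      have hA2 : 0 ≤ ∑ x, c x * q2 x * W x y := Finset.sum_nonneg fun x _ => by
        have h1 := hq2.1 x; have h2 := (hcpos x).le; have h3 := hW x y; positivity
      have hB1 : 0 ≤ ∑ x, q1 x * W x y :=
        Finset.sum_nonneg fun x _ => mul_nonneg (hq1.1 x) (hW x y)
      have hB2 : 0 ≤ ∑ x, q2 x * W x y :=
        Finset.sum_nonneg fun x _ => mul_nonneg (hq2.1 x) (hW x y)
      have hz1 : (∑ x, q1 x * W x y) = 0 → (∑ x, c x * q1 x * W x y) = 0 := by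
        intro h
        have hterm := (Finset.sum_eq_zero_iff_of_nonneg
          (fun x _ => mul_nonneg (hq1.1 x) (hW x y))).mp h
        exact Finset.sum_eq_zero fun x hx => by
          rw [show c x * q1 x * W x y = c x * (q1 x * W x y) by ring, hterm x hx, mul_zero]
      have hz2 : (∑ x, q2 x * W x y) = 0 → (∑ x, c x * q2 x * W x y) = 0 := by
        intro h
        have hterm := (Finset.sum_eq_zero_iff_of_nonneg
          (fun x _ => mul_nonneg (hq2.1 x) (hW x y))).mp h
        exact Finset.sum_eq_zero fun x hx => by
          rw [show c x * q2 x * W x y = c x * (q2 x * W x y) by ring, hterm x hx, mul_zero]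
      exact persp_ineq hρ ha hb hab hA1 hA2 hB1 hB2 hz1 hz2
    have hconc : ConcaveOn ℝ S (fun q => (∑ x, c x ^ ρ * q x) ^ lam) := by
      refine ⟨hSconv, ?_⟩
      rintro q1 hq1 q2 hq2 a b ha hb hab
      simp only [smul_eq_mul, Pi.add_apply, Pi.smul_apply]
      have eL : ∑ x, c x ^ ρ * (a * q1 x + b * q2 x)
          = a * (∑ x, c x ^ ρ * q1 x) + b * (∑ x, c x ^ ρ * q2 x) := by
        rw [Finset.mul_sum, Finset.mul_sum, ← Finset.sum_add_distrib]
        exact Finset.sum_congr rfl fun x _ => by ring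
      rw [eL]
      have h1' : (0:ℝ) ≤ ∑ x, c x ^ ρ * q1 x := Finset.sum_nonneg fun x _ =>
        mul_nonneg (Real.rpow_nonneg (hcpos x).le _) (hq1.1 x)
      have h2' : (0:ℝ) ≤ ∑ x, c x ^ ρ * q2 x := Finset.sum_nonneg fun x _ =>
        mul_nonneg (Real.rpow_nonneg (hcpos x).le _) (hq2.1 x)
      have hj := (Real.strictConcaveOn_rpow hlam0 hlam1).concaveOn.2
        (Set.mem_Ici.2 h1') (Set.mem_Ici.2 h2') ha hb hab
      simpa using hj
    exact hsum.sub hconc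
  have hcont : ContinuousOn g S := by
    set O : Set (X → ℝ) := {q | ∀ x, 0 ≤ q x} with hO'
    have hO : S ⊆ O := fun q hq => hq.1
    have hcontL : Continuous fun q : X → ℝ => (∑ x, c x ^ ρ * q x) ^ lam := by
      have h1 : Continuous fun q : X → ℝ => ∑ x, c x ^ ρ * q x :=
        continuous_finset_sum _ fun x _ => continuous_const.mul (continuous_apply x)
      exact h1.rpow_const fun q => Or.inr hlam0.le
    have hterm : ∀ y : Y, ContinuousOn
        (fun q : X → ℝ => (∑ x, c x * q x * W x y) ^ ρ * (∑ x, q x * W x y) ^ (1-ρ)) O := by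
      intro y
      set A : (X → ℝ) → ℝ := fun q => ∑ x, c x * q x * W x y with hA
      set B : (X → ℝ) → ℝ := fun q => ∑ x, q x * W x y with hB
      have hAc : Continuous A := continuous_finset_sum _ fun x _ =>
        (continuous_const.mul (continuous_apply x)).mul continuous_const
      have hBc : Continuous B := continuous_finset_sum _ fun x _ =>
        (continuous_apply x).mul continuous_const
      set C : ℝ := ∑ x, c x with hCsum
      have hcleC : ∀ x, c x ≤ C := fun x =>
        Finset.single_le_sum (fun i _ => (hcpos i).le) (Finset.mem_univ x)
      have hCpos : 0 ≤ C := Finset.sum_nonneg fun x _ => (hcpos x).le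
      have hABq : ∀ q ∈ O, 0 ≤ A q ∧ 0 ≤ B q ∧ A q ≤ C * B q := by
        intro q hq
        have hA0 : 0 ≤ A q := Finset.sum_nonneg fun x _ => by
          have h1 := hq x; have h2 := (hcpos x).le; have h3 := hW x y; positivity
        have hB0 : 0 ≤ B q := Finset.sum_nonneg fun x _ => mul_nonneg (hq x) (hW x y)
        refine ⟨hA0, hB0, ?_⟩
        rw [hA, hB]
        simp only
        rw [Finset.mul_sum]
        refine Finset.sum_le_sum fun x _ => ?_
        have h1 := mul_le_mul_of_nonneg_right (hcleC x) (mul_nonneg (hq x) (hW x y))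
        calc c x * q x * W x y = c x * (q x * W x y) := by ring
          _ ≤ C * (q x * W x y) := h1
      have hub : ∀ q ∈ O, A q ^ ρ * B q ^ (1-ρ) ≤ C ^ ρ * B q := by
        intro q hq
        obtain ⟨hA0, hB0', hACB⟩ := hABq q hq
        rcases eq_or_lt_of_le hB0' with hBz | hBp
        · rw [← hBz, Real.zero_rpow hρ1', mul_zero, mul_zero]
        · have h1 : A q ^ ρ ≤ (C * B q) ^ ρ := Real.rpow_le_rpow hA0 hACB hρ0.le
          have h2 : A q ^ ρ * B q ^ (1-ρ) ≤ (C * B q) ^ ρ * B q ^ (1-ρ) :=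
            mul_le_mul_of_nonneg_right h1 (Real.rpow_nonneg hB0' _)
          refine le_trans h2 (le_of_eq ?_)
          rw [Real.mul_rpow hCpos hB0', mul_assoc, ← Real.rpow_add hBp,
            show ρ + (1-ρ) = 1 by ring, Real.rpow_one]
      have hlb : ∀ q ∈ O, 0 ≤ A q ^ ρ * B q ^ (1-ρ) := by
        intro q hq
        obtain ⟨hA0, hB0', -⟩ := hABq q hq
        positivity
      intro q0 hq0
      by_cases hB0 : B q0 = 0
      · have hφ0 : A q0 = 0 := by
          have hterm0 := (Finset.sum_eq_zero_iff_of_nonneg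
            (fun x _ => mul_nonneg (hq0 x) (hW x y))).mp hB0
          exact Finset.sum_eq_zero fun x hx => by
            rw [show c x * q0 x * W x y = c x * (q0 x * W x y) by ring, hterm0 x hx, mul_zero]
        have hval : A q0 ^ ρ * B q0 ^ (1-ρ) = 0 := by
          rw [hφ0, Real.zero_rpow (ne_of_gt hρ0), zero_mul]
        show Filter.Tendsto (fun q => A q ^ ρ * B q ^ (1-ρ)) (nhdsWithin q0 O)
          (nhds (A q0 ^ ρ * B q0 ^ (1-ρ)))
        rw [hval]
        have htendB : Filter.Tendsto B (nhdsWithin q0 O) (nhds 0) := by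
          have h := (hBc.tendsto q0).mono_left (nhdsWithin_le_nhds (s := O))
          rwa [hB0] at h
        have htend : Filter.Tendsto (fun q => C ^ ρ * B q) (nhdsWithin q0 O) (nhds 0) := by
          have h := htendB.const_mul (C ^ ρ)
          simpa using h
        exact squeeze_zero' (Filter.eventually_of_mem self_mem_nhdsWithin hlb)
          (Filter.eventually_of_mem self_mem_nhdsWithin hub) htend
      · refine ContinuousAt.continuousWithinAt ?_
        exact ((Real.continuousAt_rpow_const _ _ (Or.inr hρ0.le)).comp hAc.continuousAt).mul
          ((Real.continuousAt_rpow_const _ _ (Or.inl hB0)).comp hBc.continuousAt)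
    have hsumc : ContinuousOn (fun q : X → ℝ =>
        ∑ y, (∑ x, c x * q x * W x y) ^ ρ * (∑ x, q x * W x y) ^ (1-ρ)) O :=
      continuousOn_finset_sum _ fun y _ => hterm y
    exact (hsumc.sub hcontL.continuousOn).mono hO
  have hScomp : IsCompact S := by
    have hcl1 : IsClosed {q : X → ℝ | ∀ x, 0 ≤ q x} := by
      have : {q : X → ℝ | ∀ x, 0 ≤ q x} = ⋂ x, {q : X → ℝ | 0 ≤ q x} := by ext q; simp
      rw [this]
      exact isClosed_iInter fun x => isClosed_le continuous_const (continuous_apply x)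
    have hcl2 : IsClosed {q : X → ℝ | ∑ x, q x = 1} :=
      isClosed_eq (continuous_finset_sum _ fun x _ => continuous_apply x) continuous_const
    have hcl3 : IsClosed {q : X → ℝ | ∑ x, c x * q x = 1} :=
      isClosed_eq (continuous_finset_sum _ fun x _ => continuous_const.mul (continuous_apply x))
        continuous_const
    have hclosed : IsClosed S := by
      have hrw : S = {q : X → ℝ | ∀ x, 0 ≤ q x} ∩
          ({q : X → ℝ | ∑ x, q x = 1} ∩ {q : X → ℝ | ∑ x, c x * q x = 1}) := by
        ext q; simp only [hS', Set.mem_setOf_eq, Set.mem_inter_iff, and_assoc]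
      rw [hrw]; exact hcl1.inter (hcl2.inter hcl3)
    have hsub : S ⊆ Set.Icc (0 : X → ℝ) 1 := by
      rintro q ⟨hqn, hqs, -⟩
      refine ⟨fun x => hqn x, fun x => ?_⟩
      have hle := Finset.single_le_sum (f := q) (fun i _ => hqn i) (Finset.mem_univ x)
      rw [hqs] at hle
      simpa using hle
    exact IsCompact.of_isClosed_subset isCompact_Icc hclosed hsub
  obtain ⟨q0, hq0S, hq0max⟩ := hScomp.exists_isMaxOn ⟨P₁, hP₁S⟩ hcont
  set m := g q0 with hm
  set M : Set (X → ℝ) := S ∩ {q | m ≤ g q} with hM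
  have hMne : M.Nonempty := ⟨q0, hq0S, le_refl m⟩
  have hMclosed : IsClosed M := by
    have h2 : IsClosed (S ∩ g ⁻¹' (Set.Ici m)) :=
      hcont.preimage_isClosed_of_isClosed hScomp.isClosed isClosed_Ici
    exact h2
  have hMcomp : IsCompact M := hScomp.of_isClosed_subset hMclosed Set.inter_subset_left
  have hMext : IsExtreme ℝ S M := by
    refine ⟨Set.inter_subset_left, ?_⟩
    rintro x1 hx1 x2 hx2 x ⟨hxS, hxm⟩ hseg
    obtain ⟨a, b, ha, hb, hab, rfl⟩ := hseg
    have hgle := hgconv.2 hx1 hx2 ha.le hb.le hab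
    simp only [smul_eq_mul] at hgle
    have hg1 : g x1 ≤ m := hq0max hx1
    have hg2 : g x2 ≤ m := hq0max hx2
    have hxm' : m ≤ g (a • x1 + b • x2) := hxm
    have k1 : m ≤ a * g x1 + b * g x2 := le_trans hxm' hgle
    have hm' : a * m + b * m = m := by
      calc a * m + b * m = (a + b) * m := by ring
        _ = m := by rw [hab, one_mul]
    · refine ⟨hx1, ?_⟩
      show m ≤ g x1
      by_contra hcon; push_neg at hcon
      linarith [mul_lt_mul_of_pos_left hcon ha, mul_le_mul_of_nonneg_left hg2 hb.le]
  obtain ⟨e, he⟩ := hMcomp.extremePoints_nonempty hMne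
  have heS : e ∈ Set.extremePoints ℝ S := hMext.extremePoints_subset_extremePoints he
  have hsupp : Set.ncard {x | e x ≠ 0} ≤ 2 := by
    by_contra hcard
    push_neg at hcard
    obtain ⟨u, hu_sub, hu_card⟩ :=
      Set.exists_subset_card_eq (show 3 ≤ Set.ncard {x | e x ≠ 0} by omega)
    obtain ⟨x1, x2, x3, h12, h13, h23, rfl⟩ := Set.ncard_eq_three.mp hu_card
    have he1 : e x1 ≠ 0 := hu_sub (by simp)
    have he2 : e x2 ≠ 0 := hu_sub (by simp)
    have he3 : e x3 ≠ 0 := hu_sub (by simp)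
    obtain ⟨hen, hes, hec⟩ := heS.1
    have hp1 : 0 < e x1 := lt_of_le_of_ne (hen x1) (Ne.symm he1)
    have hp2 : 0 < e x2 := lt_of_le_of_ne (hen x2) (Ne.symm he2)
    have hp3 : 0 < e x3 := lt_of_le_of_ne (hen x3) (Ne.symm he3)
    obtain ⟨a, b, d, habd, hlin, hnz⟩ : ∃ a b d : ℝ, a + b + d = 0 ∧
        c x1 * a + c x2 * b + c x3 * d = 0 ∧ (a ≠ 0 ∨ d ≠ 0) := by
      by_cases hcc : c x1 = c x2
      · exact ⟨1, -1, 0, by ring, by rw [hcc]; ring, Or.inl one_ne_zero⟩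
      · exact ⟨c x2 - c x3, c x3 - c x1, c x1 - c x2, by ring, by ring,
          Or.inr (sub_ne_zero.2 hcc)⟩
    set v : X → ℝ := fun x =>
      (if x = x1 then a else 0) + (if x = x2 then b else 0) + (if x = x3 then d else 0) with hv
    have hv1 : v x1 = a := by simp [hv, h12, h13]
    have hv2 : v x2 = b := by simp [hv, Ne.symm h12, h23]
    have hv3 : v x3 = d := by simp [hv, Ne.symm h13, Ne.symm h23]
    have hsumv : ∀ f : X → ℝ, ∑ x, f x * v x = f x1 * a + f x2 * b + f x3 * d := by
      intro f
      simp only [hv, mul_add, mul_ite, mul_zero]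
      rw [Finset.sum_add_distrib, Finset.sum_add_distrib]
      simp [Finset.sum_ite_eq']
    set δ := min (e x1) (min (e x2) (e x3)) with hδ
    have hδp : 0 < δ := lt_min hp1 (lt_min hp2 hp3)
    set Cm := |a| + |b| + |d| + 1 with hC
    have hCp : 0 < Cm := by positivity
    set ε := δ / Cm with hε
    have hεp : 0 < ε := div_pos hδp hCp
    have hbound : ∀ x, ε * |v x| ≤ e x ∨ v x = 0 := by
      intro x
      have habsC : ∀ w : ℝ, |w| ≤ Cm → ε * |w| ≤ δ := by
        intro w hw
        calc ε * |w| ≤ ε * Cm := mul_le_mul_of_nonneg_left hw hεp.le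
          _ = δ := by rw [hε]; field_simp
      by_cases hx1 : x = x1
      · left; subst hx1
        rw [hv1]
        exact le_trans (habsC a (by linarith [abs_nonneg b, abs_nonneg d])) (min_le_left _ _)
      by_cases hx2 : x = x2
      · left; subst hx2
        rw [hv2]
        exact le_trans (habsC b (by linarith [abs_nonneg a, abs_nonneg d]))
          (le_trans (min_le_right _ _) (min_le_left _ _))
      by_cases hx3 : x = x3
      · left; subst hx3
        rw [hv3]
        exact le_trans (habsC d (by linarith [abs_nonneg a, abs_nonneg b]))
          (le_trans (min_le_right _ _) (min_le_right _ _))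
      · right; simp [hv, hx1, hx2, hx3]
    have hsumv0 : ∑ x, v x = 0 := by
      have h := hsumv (fun _ => (1:ℝ))
      simp only [one_mul] at h
      rw [h]; linarith
    have hsumvc : ∑ x, c x * v x = 0 := by rw [hsumv c]; linarith
    have hnonneg : ∀ (σ : ℝ), σ = 1 ∨ σ = -1 → ∀ x, 0 ≤ e x + σ * (ε * v x) := by
      rintro σ hσ x
      have habs : |ε * v x| = ε * |v x| := by rw [abs_mul, abs_of_pos hεp]
      rcases hbound x with h | h
      · have h1 := neg_abs_le (ε * v x)
        have h2 := le_abs_self (ε * v x)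
        rw [habs] at h1 h2
        rcases hσ with rfl | rfl <;> [skip; skip] <;> nlinarith [hen x]
      · rcases hσ with rfl | rfl <;> simp [h, hen x]
    have hmemS : ∀ (σ : ℝ), σ = 1 ∨ σ = -1 → (e + (σ * ε) • v) ∈ S := by
      intro σ hσ
      refine ⟨fun x => ?_, ?_, ?_⟩
      · have := hnonneg σ hσ x
        simp only [Pi.add_apply, Pi.smul_apply, smul_eq_mul]
        linarith [this]
      · simp only [Pi.add_apply, Pi.smul_apply, smul_eq_mul]
        rw [Finset.sum_add_distrib, hes, ← Finset.mul_sum, hsumv0, mul_zero, add_zero]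
      · calc ∑ x, c x * (e x + σ * ε * v x)
            = (∑ x, c x * e x) + σ * ε * (∑ x, c x * v x) := by
              rw [Finset.mul_sum, ← Finset.sum_add_distrib]
              exact Finset.sum_congr rfl fun x _ => by ring
          _ = 1 := by rw [hec, hsumvc, mul_zero, add_zero]
    have hposS : (e + (1 * ε) • v) ∈ S := hmemS 1 (Or.inl rfl)
    have hnegS : (e + ((-1) * ε) • v) ∈ S := hmemS (-1) (Or.inr rfl)
    have hseg : e ∈ openSegment ℝ (e + (1 * ε) • v) (e + ((-1) * ε) • v) := by
      refine ⟨1/2, 1/2, by norm_num, by norm_num, by norm_num, ?_⟩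
      funext x
      simp only [Pi.add_apply, Pi.smul_apply, smul_eq_mul]
      ring
    have heq := heS.2 hposS hnegS hseg
    have hεv : ∀ x, ε * v x = 0 := by
      intro x
      have := congrFun heq x
      simp only [Pi.add_apply, Pi.smul_apply, smul_eq_mul, one_mul] at this
      linarith [this]
    rcases hnz with ha0 | hd0
    · exact ha0 (by have := hεv x1; rw [hv1] at this; exact (mul_eq_zero.mp this).resolve_left hεp.ne')
    · exact hd0 (by have := hεv x3; rw [hv3] at this; exact (mul_eq_zero.mp this).resolve_left hεp.ne')
  exact ⟨hgconv, e, heS, hsupp, fun q hq => le_trans (hq0max hq) he.1.2⟩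
end
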